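/- Let x_1, …, x_n be vectors in ℝ^m and let λ_1, …, λ_n be nonzero real numbers. Then det(∑_{k=1}^n λ_k E_{kk} + γ(x_1, …, x_n)) = (∏_{k=1}^n λ_k) · (1 + ∑_{r=1}^n ∑_{1 ≤ i_1 < … < i_r ≤ n} (λ_{i_1} λ_{i_2} ⋯ λ_{i_r})⁻¹ · Γ(x_{i_1}, …, x_{i_r})), where E_{kk} is the n×n matrix unit with 1 in position (k,k) and zeros elsewhere. -/

import Mathlib

open Matrix Finset

lemma det_piecewise_diagonal {n : ℕ} (l : Fin n → ℝ) (G : Matrix (Fin n) (Fin n) ℝ)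
    (s : Finset (Fin n)) :
    (Matrix.of fun i j => if i ∈ s then Matrix.diagonal l i j else G i j).det =
      (∏ i ∈ s, l i) * (G.submatrix (fun a : {a : Fin n // a ∈ sᶜ} => a.1)
        (fun a : {a : Fin n // a ∈ sᶜ} => a.1)).det := by
  classical
  set M : Matrix (Fin n) (Fin n) ℝ :=
    Matrix.of fun i j => if i ∈ s then Matrix.diagonal l i j else G i j with hM
  rw [← Matrix.det_submatrix_equiv_self (Equiv.sumCompl (· ∈ s)) M]
  have hsub : M.submatrix (Equiv.sumCompl (· ∈ s)) (Equiv.sumCompl (· ∈ s)) =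
      Matrix.fromBlocks
      (Matrix.diagonal fun i : {a : Fin n // a ∈ s} => l i.1) 0
      (Matrix.of fun (i : {a : Fin n // ¬ a ∈ s}) (j : {a : Fin n // a ∈ s}) => G i.1 j.1)
      (Matrix.of fun i j : {a : Fin n // ¬ a ∈ s} => G i.1 j.1) := by
    ext i j
    rcases i with ⟨i, hi⟩ | ⟨i, hi⟩ <;> rcases j with ⟨j, hj⟩ | ⟨j, hj⟩
    · simp [M, hi, Matrix.diagonal_apply, Subtype.ext_iff]
    · simp only [M, Equiv.sumCompl_apply_inl, Equiv.sumCompl_apply_inr,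
        Matrix.submatrix_apply, Matrix.of_apply, hi, if_true, Matrix.fromBlocks_apply₁₂,
        Matrix.zero_apply, Matrix.diagonal_apply]
      refine if_neg fun h => hj ?_
      exact h ▸ hi
    · simp [M, hi]
    · simp [M, hi]
  rw [hsub, Matrix.det_fromBlocks_zero₁₂]
  congr 1
  · rw [Matrix.det_diagonal]
    exact Finset.prod_coe_sort s l
  · rw [← Matrix.det_submatrix_equiv_self
      (Equiv.subtypeEquivRight (fun a => by simp) :
        {a : Fin n // a ∈ sᶜ} ≃ {a : Fin n // ¬ a ∈ s}).symm]
    rfl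

theorem det_diagonal_add_gram (m n : ℕ) (x : Fin n → Fin m → ℝ) (l : Fin n → ℝ)
    (hl : ∀ k, l k ≠ 0) :
    (Matrix.diagonal l + Matrix.of fun i j : Fin n => ∑ k : Fin m, x i k * x j k).det =
      (∏ k, l k) *
        (1 + ∑ S ∈ (Finset.univ : Finset (Fin n)).powerset.filter Finset.Nonempty,
          (∏ i ∈ S, l i)⁻¹ *
            Matrix.det (Matrix.of fun i j : {a : Fin n // a ∈ S} =>
              ∑ k : Fin m, x i.1 k * x j.1 k)) := by
  classical
  set G : Matrix (Fin n) (Fin n) ℝ :=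
    Matrix.of fun i j : Fin n => ∑ k : Fin m, x i k * x j k with hG
  set Γ : Finset (Fin n) → ℝ := fun S =>
    (G.submatrix (fun a : {a : Fin n // a ∈ S} => a.1)
      (fun a : {a : Fin n // a ∈ S} => a.1)).det with hΓ
  have hΓ' : ∀ S : Finset (Fin n),
      Matrix.det (Matrix.of fun i j : {a : Fin n // a ∈ S} =>
        ∑ k : Fin m, x i.1 k * x j.1 k) = Γ S := fun S => rfl
  have h1 : (Matrix.diagonal l + G).det =
      ∑ s : Finset (Fin n),
        (Matrix.of fun i j => if i ∈ s then Matrix.diagonal l i j else G i j).det := by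
    calc (Matrix.diagonal l + G).det
        = Matrix.detRowAlternating ((Matrix.diagonal l) + G) := rfl
      _ = ∑ s : Finset (Fin n),
            Matrix.detRowAlternating (s.piecewise (Matrix.diagonal l) G) :=
          (Matrix.detRowAlternating (R := ℝ) (n := Fin n)).toMultilinearMap.map_add_univ
            (Matrix.diagonal l) G
      _ = _ := by
          refine Finset.sum_congr rfl fun s _ => ?_
          congr 1
          ext i j
          simp [Finset.piecewise, apply_ite (fun f : Fin n → ℝ => f j)]
  rw [h1]
  have h2 : ∀ s : Finset (Fin n),
      (Matrix.of fun i j => if i ∈ s then Matrix.diagonal l i j else G i j).det =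
        (∏ i ∈ s, l i) * Γ sᶜ := fun s => det_piecewise_diagonal l G s
  simp_rw [h2]
  have h3 : ∑ s : Finset (Fin n), (∏ i ∈ s, l i) * Γ sᶜ =
      ∑ S : Finset (Fin n), (∏ i ∈ Sᶜ, l i) * Γ S := by
    refine Fintype.sum_equiv (Function.Involutive.toPerm (fun s : Finset (Fin n) => sᶜ) compl_compl) _ _ fun s => ?_
    simp [Function.Involutive.toPerm]
  rw [h3]
  have h4 : ∀ S : Finset (Fin n), (∏ i ∈ Sᶜ, l i) = (∏ k, l k) * (∏ i ∈ S, l i)⁻¹ := by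
    intro S
    have hne : (∏ i ∈ S, l i) ≠ 0 := Finset.prod_ne_zero_iff.2 fun i _ => hl i
    field_simp
    rw [mul_comm]
    exact Finset.prod_mul_prod_compl S l
  simp_rw [h4, hΓ']
  rw [← Finset.sum_filter_add_sum_filter_not Finset.univ Finset.Nonempty]
  have h5 : (Finset.univ : Finset (Finset (Fin n))).filter (fun S => ¬ S.Nonempty) = {∅} := by
    ext S
    simp [Finset.not_nonempty_iff_eq_empty]
  rw [h5, Finset.sum_singleton]
  have hemp : Γ ∅ = 1 := by
    have : IsEmpty {a : Fin n // a ∈ (∅ : Finset (Fin n))} := by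
      constructor; rintro ⟨a, ha⟩; simp at ha
    exact Matrix.det_isEmpty
  rw [hemp]
  rw [Finset.powerset_univ]
  rw [mul_add, mul_one, Finset.mul_sum]
  simp only [Finset.prod_empty, inv_one, mul_one]
  rw [add_comm]
  congr 1
  refine Finset.sum_congr rfl fun S _ => ?_
  ring
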